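/- (Pythagorean identity for block factorizations.) Let 𝒳 = 𝒳⁽¹⁾ × ⋯ × 𝒳⁽ᵈ⁾ be a finite product state space and let (Sᵢ)_{i=1}^n be a partition of ⟦d⟧ into nonempty mutually disjoint blocks. Let π ∈ 𝒫(𝒳) be strictly positive, P ∈ ℒ(𝒳), and Lᵢ ∈ ℒ(𝒳^{(Sᵢ)}) for i = 1,…,n. Then D_KL^π(P ‖ ⊗_{i=1}^n Lᵢ) = D_KL^π(P ‖ ⊗_{i=1}^n P_π^{(Sᵢ)}) + Σ_{i=1}^n D_KL^{π^{(Sᵢ)}}(P_π^{(Sᵢ)} ‖ Lᵢ). Consequently ⊗_{i=1}^n P_π^{(Sᵢ)} is the unique minimizer of (L₁,…,Lₙ) ↦ D_KL^π(P ‖ ⊗_{i=1}^n Lᵢ). -/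

import Mathlib

open Filter Finset
open scoped Classical

/-- `p` is a probability mass on the finite set `Y`. -/
def IsProbMass {Y : Type*} [Fintype Y] (p : Y → ℝ) : Prop :=
  (∀ x, 0 ≤ p x) ∧ ∑ x, p x = 1

/-- `M` is a transition matrix (row-stochastic matrix) on the finite set `Y`. -/
def IsTransMat {Y : Type*} [Fintype Y] (M : Y → Y → ℝ) : Prop :=
  (∀ x y, 0 ≤ M x y) ∧ ∀ x, ∑ y, M x y = 1

/-- The tensor product `⊗ᵢ Lᵢ` of transition matrices on a finite product space. -/
noncomputable def tensorMat {d : ℕ} {X : Fin d → Type*} (L : ∀ i, X i → X i → ℝ) :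
    (∀ i, X i) → (∀ i, X i) → ℝ :=
  fun x y => ∏ i, L i (x i) (y i)

/-- The term `M(x,y)·ln(M(x,y)/L(x,y))` with the conventions `0·ln(0/·) := 0` and
`a·ln(a/0) := +∞` for `a > 0`. -/
noncomputable def klTerm (m l : ℝ) : EReal :=
  if m = 0 then 0 else if l = 0 then ⊤ else ((m * Real.log (m / l) : ℝ) : EReal)

/-- The KL divergence `D_KL^π(M ‖ L)` between transition matrices, with the convention
`0·∞ := 0` (EReal multiplication). -/
noncomputable def klDiv {Y : Type*} [Fintype Y] (π : Y → ℝ) (M L : Y → Y → ℝ) : EReal :=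
  ∑ x, (π x : EReal) * ∑ y, klTerm (M x y) (L x y)

/-- The marginal `π⁽ˢ⁾` of `π` on the coordinates in `S`. -/
noncomputable def margS {d : ℕ} {X : Fin d → Type*} [∀ i, Fintype (X i)]
    (π : (∀ i, X i) → ℝ) (S : Finset (Fin d)) : (∀ j : S, X j.1) → ℝ :=
  fun xs => ∑ x : ∀ i, X i, if ∀ j : S, x j.1 = xs j then π x else 0

/-- The keep-`S`-in transition matrix `P_π⁽ˢ⁾` of `P` with respect to `π`. -/
noncomputable def keepS {d : ℕ} {X : Fin d → Type*} [∀ i, Fintype (X i)]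
    (π : (∀ i, X i) → ℝ) (P : (∀ i, X i) → (∀ i, X i) → ℝ) (S : Finset (Fin d)) :
    (∀ j : S, X j.1) → (∀ j : S, X j.1) → ℝ :=
  fun xs ys =>
    (∑ x : ∀ i, X i, ∑ y : ∀ i, X i,
        if (∀ j : S, x j.1 = xs j) ∧ (∀ j : S, y j.1 = ys j) then π x * P x y else 0) /
      margS π S xs

/-- The restriction of `x` to the coordinates in `S`. -/
noncomputable def restr {d : ℕ} {X : Fin d → Type*} (S : Finset (Fin d)) (x : ∀ i, X i) :
    ∀ j : S, X j.1 :=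
  fun j => x j.1

/-- The tensor product over the blocks `S i` of transition matrices `L i` on `𝒳^{(S i)}`. -/
noncomputable def tensorBlocks {d n : ℕ} {X : Fin d → Type*} (S : Fin n → Finset (Fin d))
    (L : ∀ i : Fin n, (∀ j : S i, X j.1) → (∀ j : S i, X j.1) → ℝ) :
    (∀ i, X i) → (∀ i, X i) → ℝ :=
  fun x y => ∏ i, L i (restr (S i) x) (restr (S i) y)

/- ### Auxiliary lemmas -/

lemma ereal_coe_sum {α : Type*} (s : Finset α) (f : α → ℝ) :
    ((∑ a ∈ s, f a : ℝ) : EReal) = ∑ a ∈ s, (f a : EReal) := by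
  induction s using Finset.cons_induction with
  | empty => simp
  | cons a s ha ih => rw [Finset.sum_cons, Finset.sum_cons, EReal.coe_add, ih]

lemma ereal_sum_ne_bot {α : Type*} (s : Finset α) (f : α → EReal)
    (h : ∀ a ∈ s, f a ≠ ⊥) : ∑ a ∈ s, f a ≠ ⊥ := by
  induction s using Finset.cons_induction with
  | empty => simp
  | cons a s ha ih =>
      rw [Finset.sum_cons, Ne, EReal.add_eq_bot_iff]
      push_neg
      exact ⟨h a (Finset.mem_cons_self a s), ih fun b hb => h b (Finset.mem_cons_of_mem hb)⟩

lemma ereal_sum_eq_top {α : Type*} (s : Finset α) (f : α → EReal)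
    (h : ∀ a ∈ s, f a ≠ ⊥) (a : α) (ha : a ∈ s) (hta : f a = ⊤) : ∑ b ∈ s, f b = ⊤ := by
  rw [← Finset.add_sum_erase s f ha, hta]
  exact EReal.top_add_of_ne_bot
    (ereal_sum_ne_bot _ _ fun b hb => h b (Finset.mem_of_mem_erase hb))

lemma klTerm_ne_bot (m l : ℝ) : klTerm m l ≠ ⊥ := by
  unfold klTerm; split_ifs <;> simp [← EReal.coe_mul]

lemma ereal_coe_mul_ne_bot (a : ℝ) (ha : 0 ≤ a) (x : EReal) (hx : x ≠ ⊥) :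
    (a : EReal) * x ≠ ⊥ := by
  induction x with
  | bot => exact absurd rfl hx
  | coe r => rw [← EReal.coe_mul]; exact EReal.coe_ne_bot _
  | top =>
      rcases eq_or_lt_of_le ha with h | h
      · rw [← h]; simp
      · rw [EReal.coe_mul_top_of_pos h]; simp

lemma klDiv_ne_bot {Y : Type*} [Fintype Y] (π : Y → ℝ) (hπ : ∀ x, 0 ≤ π x)
    (M L : Y → Y → ℝ) : klDiv π M L ≠ ⊥ :=
  ereal_sum_ne_bot _ _ fun x _ => ereal_coe_mul_ne_bot _ (hπ x) _
    (ereal_sum_ne_bot _ _ fun _ _ => klTerm_ne_bot _ _)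

noncomputable def realKl {Y : Type*} [Fintype Y] (π : Y → ℝ) (M L : Y → Y → ℝ) : ℝ :=
  ∑ x, π x * ∑ y, (if M x y = 0 then 0 else M x y * Real.log (M x y / L x y))

lemma klTerm_eq_coe {m l : ℝ} (h : m ≠ 0 → l ≠ 0) :
    klTerm m l = (((if m = 0 then 0 else m * Real.log (m / l)) : ℝ) : EReal) := by
  unfold klTerm
  by_cases hm : m = 0
  · simp [hm]
  · rw [if_neg hm, if_neg hm, if_neg (h hm)]

lemma klDiv_eq_real {Y : Type*} [Fintype Y] (π : Y → ℝ) (M L : Y → Y → ℝ)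
    (h : ∀ x y, M x y ≠ 0 → L x y ≠ 0) :
    klDiv π M L = ((realKl π M L : ℝ) : EReal) := by
  rw [realKl, klDiv, ereal_coe_sum]
  refine Finset.sum_congr rfl fun x _ => ?_
  rw [EReal.coe_mul, ereal_coe_sum]
  exact congrArg _ (Finset.sum_congr rfl fun y _ => klTerm_eq_coe (h x y))

lemma gibbs_row {Y : Type*} [Fintype Y] (m l : Y → ℝ) (hm0 : ∀ y, 0 ≤ m y)
    (hl0 : ∀ y, 0 ≤ l y) (hm1 : ∑ y, m y = 1) (hl1 : ∑ y, l y = 1)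
    (hml : ∀ y, m y ≠ 0 → l y ≠ 0) :
    0 ≤ ∑ y, (if m y = 0 then 0 else m y * Real.log (m y / l y)) ∧
      ((∑ y, (if m y = 0 then 0 else m y * Real.log (m y / l y))) = 0 → m = l) := by
  set g : Y → ℝ := fun y => if m y = 0 then 0 else m y * Real.log (m y / l y) with hg
  set δ : Y → ℝ := fun y => g y - (m y - l y) with hδ
  have key : ∀ y, 0 ≤ δ y ∧ (δ y = 0 → m y = l y) := by
    intro y
    by_cases hm : m y = 0
    · constructor
      · simp [hδ, hg, hm]; exact hl0 y
      · intro h; simp [hδ, hg, hm] at h; rw [hm, h]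
    · have hmpos : 0 < m y := lt_of_le_of_ne (hm0 y) (Ne.symm hm)
      have hlpos : 0 < l y := lt_of_le_of_ne (hl0 y) (Ne.symm (hml y hm))
      have ht : 0 < l y / m y := div_pos hlpos hmpos
      have hglog : g y = m y * Real.log (m y / l y) := if_neg hm
      have hlogdiv : Real.log (m y / l y) = - Real.log (l y / m y) := by
        rw [← Real.log_inv]
        congr 1
        rw [inv_div]
      have hδy : δ y = m y * ((l y / m y) - 1 - Real.log (l y / m y)) := by
        rw [hδ]
        simp only [hglog, hlogdiv]
        field_simp
        ring
      constructor
      · rw [hδy]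
        have := Real.log_le_sub_one_of_pos ht
        nlinarith
      · intro h
        by_contra hne
        have hne' : l y / m y ≠ 1 := by
          intro h1
          apply hne
          field_simp at h1
          linarith
        have := Real.log_lt_sub_one_of_pos ht hne'
        rw [hδy] at h
        nlinarith
  have hsumδ : ∑ y, g y = ∑ y, δ y := by
    rw [hδ]
    simp only
    rw [Finset.sum_sub_distrib, Finset.sum_sub_distrib, hm1, hl1]
    ring
  constructor
  · rw [hsumδ]
    exact Finset.sum_nonneg fun y _ => (key y).1
  · intro h0
    rw [hsumδ] at h0
    have hz := (Finset.sum_eq_zero_iff_of_nonneg fun y _ => (key y).1).1 h0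
    funext y
    exact (key y).2 (hz y (Finset.mem_univ y))

lemma sum4_comm' {A B C D M : Type*} [AddCommMonoid M] [Fintype A] [Fintype B] [Fintype C]
    [Fintype D] (t : A → B → C → D → M) :
    ∑ a, ∑ b, ∑ c, ∑ d, t a b c d = ∑ c, ∑ d, ∑ a, ∑ b, t a b c d := by
  have h1 : ∀ a, ∑ b, ∑ c, ∑ d, t a b c d = ∑ c, ∑ d, ∑ b, t a b c d := by
    intro a
    rw [Finset.sum_comm]
    exact Finset.sum_congr rfl fun c _ => Finset.sum_comm
  simp_rw [h1]
  rw [Finset.sum_comm]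
  exact Finset.sum_congr rfl fun c _ => Finset.sum_comm

lemma restr_cond {d : ℕ} {X : Fin d → Type*} (S : Finset (Fin d)) (x : ∀ i, X i)
    (xs : ∀ j : S, X j.1) : (∀ j : S, x j.1 = xs j) ↔ restr S x = xs := by
  rw [funext_iff]
  exact Iff.rfl

lemma sum_restr_eq {d : ℕ} {X : Fin d → Type*} [∀ i, Fintype (X i)] (S : Finset (Fin d))
    (y : ∀ i, X i) (g : (∀ j : S, X j.1) → ℝ) :
    ∑ ys : ∀ j : S, X j.1, (if ∀ j : S, y j.1 = ys j then g ys else 0) = g (restr S y) := by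
  simp only [restr_cond]
  simp [Finset.sum_ite_eq]

lemma group_lemma {d : ℕ} {X : Fin d → Type*} [∀ i, Fintype (X i)] (S : Finset (Fin d))
    (F : (∀ i, X i) → (∀ i, X i) → ℝ) (f : (∀ j : S, X j.1) → (∀ j : S, X j.1) → ℝ) :
    ∑ xs : ∀ j : S, X j.1, ∑ ys : ∀ j : S, X j.1,
      (∑ x : ∀ i, X i, ∑ y : ∀ i, X i,
        if (∀ j : S, x j.1 = xs j) ∧ (∀ j : S, y j.1 = ys j) then F x y else 0) * f xs ys
    = ∑ x : ∀ i, X i, ∑ y : ∀ i, X i, F x y * f (restr S x) (restr S y) := by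
  simp only [Finset.sum_mul, ite_mul, zero_mul]
  rw [sum4_comm']
  refine Finset.sum_congr rfl fun x _ => Finset.sum_congr rfl fun y _ => ?_
  simp only [restr_cond, ite_and]
  rw [Finset.sum_comm]
  simp [Finset.sum_ite_eq]

/-- Pythagorean identity for block factorizations: for a partition `(Sᵢ)` of `⟦d⟧` into
nonempty disjoint blocks, `D_KL^π(P ‖ ⊗ᵢ Lᵢ)` decomposes as the divergence to the tensor
product of the keep-`Sᵢ`-in matrices plus the sum of the block divergences; consequently
`⊗ᵢ P_π^{(Sᵢ)}` is the unique minimizer. -/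
theorem stmt14 {d n : ℕ} {X : Fin d → Type*} [∀ i, Fintype (X i)]
    (S : Fin n → Finset (Fin d)) (hne : ∀ i, (S i).Nonempty)
    (hdisj : ∀ i i', i ≠ i' → Disjoint (S i) (S i'))
    (hcov : ∀ j : Fin d, ∃ i, j ∈ S i)
    (π : (∀ i, X i) → ℝ) (hπ : IsProbMass π) (hpos : ∀ x, 0 < π x)
    (P : (∀ i, X i) → (∀ i, X i) → ℝ) (hP : IsTransMat P)
    (L : ∀ i : Fin n, (∀ j : S i, X j.1) → (∀ j : S i, X j.1) → ℝ)
    (hL : ∀ i, IsTransMat (L i)) :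
    klDiv π P (tensorBlocks S L) =
        klDiv π P (tensorBlocks S fun i => keepS π P (S i)) +
          ∑ i, klDiv (margS π (S i)) (keepS π P (S i)) (L i) ∧
      klDiv π P (tensorBlocks S fun i => keepS π P (S i)) ≤ klDiv π P (tensorBlocks S L) ∧
      (klDiv π P (tensorBlocks S L) =
          klDiv π P (tensorBlocks S fun i => keepS π P (S i)) →
        L = fun i => keepS π P (S i)) := by
  classical
  obtain ⟨hπ0, hπ1⟩ := hπ
  obtain ⟨hP0, hP1⟩ := hP
  have hXne : Nonempty (∀ i, X i) := by
    by_contra h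
    rw [not_nonempty_iff] at h
    rw [Finset.univ_eq_empty, Finset.sum_empty] at hπ1
    exact one_ne_zero hπ1.symm
  haveI hXi : ∀ i, Nonempty (X i) := fun i => ⟨hXne.some i⟩
  -- positivity of marginals
  have hmarg : ∀ (T : Finset (Fin d)) (xs : ∀ j : T, X j.1), 0 < margS π T xs := by
    intro T xs
    obtain ⟨x0, hx0⟩ : ∃ x : ∀ i, X i, ∀ j : T, x j.1 = xs j := by
      refine ⟨fun i => if h : i ∈ T then xs ⟨i, h⟩ else Classical.arbitrary (X i), ?_⟩
      intro j
      exact dif_pos j.2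
    have hle : (if ∀ j : T, x0 j.1 = xs j then π x0 else 0) ≤
        ∑ x, (if ∀ j : T, x j.1 = xs j then π x else 0) :=
      Finset.single_le_sum (f := fun x => if ∀ j : T, x j.1 = xs j then π x else 0)
        (fun x _ => by split_ifs; exacts [(hpos x).le, le_rfl]) (Finset.mem_univ x0)
    rw [if_pos hx0] at hle
    simp only [margS]
    exact lt_of_lt_of_le (hpos x0) hle
  -- nonnegativity of numerator terms
  have hnn : ∀ (i : Fin n) (xs ys : ∀ j : S i, X j.1) (x y : ∀ i', X i'),
      (0:ℝ) ≤ if (∀ j : S i, x j.1 = xs j) ∧ (∀ j : S i, y j.1 = ys j)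
        then π x * P x y else 0 := by
    intro i xs ys x y
    split_ifs
    · exact mul_nonneg (hpos x).le (hP0 x y)
    · exact le_rfl
  -- numerator identity
  have hnum : ∀ (i : Fin n) xs ys, margS π (S i) xs * keepS π P (S i) xs ys =
      ∑ x, ∑ y, if (∀ j : S i, x j.1 = xs j) ∧ (∀ j : S i, y j.1 = ys j)
        then π x * P x y else 0 := by
    intro i xs ys
    simp only [keepS]
    rw [mul_comm, div_mul_cancel₀ _ (hmarg (S i) xs).ne']
  -- keepS nonneg
  have hQ0 : ∀ (i : Fin n) xs ys, 0 ≤ keepS π P (S i) xs ys := by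
    intro i xs ys
    simp only [keepS]
    apply div_nonneg _ (hmarg (S i) xs).le
    exact Finset.sum_nonneg fun x _ => Finset.sum_nonneg fun y _ => hnn i xs ys x y
  -- keepS positive on support of P
  have hQpos : ∀ (i : Fin n) (x y : ∀ i', X i'), P x y ≠ 0 →
      0 < keepS π P (S i) (restr (S i) x) (restr (S i) y) := by
    intro i x y hPxy
    simp only [keepS]
    apply div_pos _ (hmarg _ _)
    have hPy : 0 < π x * P x y := mul_pos (hpos x) (lt_of_le_of_ne (hP0 x y) (Ne.symm hPxy))
    have h1 : π x * P x y ≤ ∑ y', (if (∀ j : S i, x j.1 = restr (S i) x j) ∧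
        (∀ j : S i, y' j.1 = restr (S i) y j) then π x * P x y' else 0) := by
      have := Finset.single_le_sum
        (f := fun y' => if (∀ j : S i, x j.1 = restr (S i) x j) ∧
          (∀ j : S i, y' j.1 = restr (S i) y j) then π x * P x y' else 0)
        (fun y' _ => hnn i _ _ x y') (Finset.mem_univ y)
      rwa [if_pos ⟨fun j => rfl, fun j => rfl⟩] at this
    have h2 : (∑ y', (if (∀ j : S i, x j.1 = restr (S i) x j) ∧
        (∀ j : S i, y' j.1 = restr (S i) y j) then π x * P x y' else 0)) ≤
        ∑ x', ∑ y', (if (∀ j : S i, x' j.1 = restr (S i) x j) ∧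
          (∀ j : S i, y' j.1 = restr (S i) y j) then π x' * P x' y' else 0) :=
      Finset.single_le_sum
        (f := fun x' => ∑ y', (if (∀ j : S i, x' j.1 = restr (S i) x j) ∧
          (∀ j : S i, y' j.1 = restr (S i) y j) then π x' * P x' y' else 0))
        (fun x' _ => Finset.sum_nonneg fun y' _ => hnn i _ _ x' y') (Finset.mem_univ x)
    exact lt_of_lt_of_le hPy (le_trans h1 h2)
  -- row sums of keepS
  have hQrowm : ∀ (i : Fin n) xs,
      ∑ ys, margS π (S i) xs * keepS π P (S i) xs ys = margS π (S i) xs := by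
    intro i xs
    simp_rw [hnum]
    rw [Finset.sum_comm]
    have hx : ∀ x : ∀ i', X i', (∑ ys : ∀ j : S i, X j.1, ∑ y : ∀ i', X i', (if (∀ j : S i, x j.1 = xs j) ∧
        (∀ j : S i, y j.1 = ys j) then π x * P x y else 0))
        = if (∀ j : S i, x j.1 = xs j) then π x else 0 := by
      intro x
      rw [Finset.sum_comm]
      by_cases hcx : ∀ j : S i, x j.1 = xs j
      · rw [if_pos hcx]
        have : ∀ y : ∀ i', X i', (∑ ys : ∀ j : S i, X j.1, (if (∀ j : S i, x j.1 = xs j) ∧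
            (∀ j : S i, y j.1 = ys j) then π x * P x y else 0)) = π x * P x y := by
          intro y
          have h1 : ∀ ys : ∀ j : S i, X j.1, ((∀ j : S i, x j.1 = xs j) ∧ (∀ j : S i, y j.1 = ys j)) =
              (∀ j : S i, y j.1 = ys j) := fun ys => by
            simp only [eq_iff_iff]
            exact ⟨fun h => h.2, fun h => ⟨hcx, h⟩⟩
          simp_rw [h1]
          exact sum_restr_eq (S i) y _
        rw [Finset.sum_congr rfl fun y _ => this y, ← Finset.mul_sum, hP1 x, mul_one]
      · rw [if_neg hcx]
        refine Finset.sum_eq_zero fun y _ => Finset.sum_eq_zero fun ys _ => ?_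
        rw [if_neg (fun h => hcx h.1)]
    rw [Finset.sum_congr rfl fun x _ => hx x]
    simp only [margS]
  have hQrow : ∀ (i : Fin n) xs, ∑ ys, keepS π P (S i) xs ys = 1 := by
    intro i xs
    have h := hQrowm i xs
    rw [← Finset.mul_sum] at h
    have h' : margS π (S i) xs * ∑ ys, keepS π P (S i) xs ys = margS π (S i) xs * 1 := by
      rw [h, mul_one]
    exact mul_left_cancel₀ (hmarg (S i) xs).ne' h'
  -- grouping / marginalization of π·P over a block
  have hgroup : ∀ (i : Fin n) (f : (∀ j : S i, X j.1) → (∀ j : S i, X j.1) → ℝ),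
      ∑ xs, ∑ ys, margS π (S i) xs * keepS π P (S i) xs ys * f xs ys =
      ∑ x, ∑ y, π x * P x y * f (restr (S i) x) (restr (S i) y) := by
    intro i f
    have h1 : ∑ xs, ∑ ys, margS π (S i) xs * keepS π P (S i) xs ys * f xs ys =
        ∑ xs, ∑ ys, (∑ x, ∑ y, if (∀ j : S i, x j.1 = xs j) ∧
          (∀ j : S i, y j.1 = ys j) then π x * P x y else 0) * f xs ys :=
      Finset.sum_congr rfl fun xs _ => Finset.sum_congr rfl fun ys _ => by rw [hnum]
    rw [h1]
    exact group_lemma (S i) (fun x y => π x * P x y) f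
  -- the tensor product of keepS matrices is positive on the support of P
  have hQt : ∀ x y, P x y ≠ 0 → tensorBlocks S (fun i => keepS π P (S i)) x y ≠ 0 := by
    intro x y h
    have : 0 < tensorBlocks S (fun i => keepS π P (S i)) x y := by
      simp only [tensorBlocks]
      exact Finset.prod_pos fun i _ => hQpos i x y h
    exact this.ne'
  have eB := klDiv_eq_real π P (tensorBlocks S fun i => keepS π P (S i)) hQt
  by_cases hc : ∀ (i : Fin n) xs ys, keepS π P (S i) xs ys ≠ 0 → L i xs ys ≠ 0
  · -- finite case
    have hLt : ∀ x y, P x y ≠ 0 → tensorBlocks S L x y ≠ 0 := by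
      intro x y h
      have : 0 < tensorBlocks S L x y := by
        simp only [tensorBlocks]
        exact Finset.prod_pos fun i _ =>
          lt_of_le_of_ne ((hL i).1 _ _) (Ne.symm (hc i _ _ (hQpos i x y h).ne'))
      exact this.ne'
    have eA := klDiv_eq_real π P (tensorBlocks S L) hLt
    have eC : ∀ i, klDiv (margS π (S i)) (keepS π P (S i)) (L i)
        = ((realKl (margS π (S i)) (keepS π P (S i)) (L i) : ℝ) : EReal) :=
      fun i => klDiv_eq_real _ _ _ (hc i)
    -- pointwise log decomposition
    have hpoint : ∀ x y, (if P x y = 0 then (0:ℝ)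
        else P x y * Real.log (P x y / tensorBlocks S L x y)) =
        (if P x y = 0 then 0
          else P x y * Real.log (P x y / tensorBlocks S (fun i => keepS π P (S i)) x y)) +
        ∑ i, (if P x y = 0 then 0 else P x y *
          Real.log (keepS π P (S i) (restr (S i) x) (restr (S i) y) /
            L i (restr (S i) x) (restr (S i) y))) := by
      intro x y
      by_cases hPxy : P x y = 0
      · simp [hPxy]
      · simp only [if_neg hPxy]
        have hQi : ∀ i : Fin n, keepS π P (S i) (restr (S i) x) (restr (S i) y) ≠ 0 :=
          fun i => (hQpos i x y hPxy).ne'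
        have hLi : ∀ i : Fin n, L i (restr (S i) x) (restr (S i) y) ≠ 0 :=
          fun i => hc i _ _ (hQi i)
        have hlogL : Real.log (tensorBlocks S L x y) =
            ∑ i, Real.log (L i (restr (S i) x) (restr (S i) y)) := by
          simp only [tensorBlocks]
          exact Real.log_prod fun i _ => hLi i
        have hlogQ : Real.log (tensorBlocks S (fun i => keepS π P (S i)) x y) =
            ∑ i, Real.log (keepS π P (S i) (restr (S i) x) (restr (S i) y)) := by
          simp only [tensorBlocks]
          exact Real.log_prod fun i _ => hQi i
        rw [Real.log_div hPxy (hLt x y hPxy), Real.log_div hPxy (hQt x y hPxy), hlogL, hlogQ,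
          ← Finset.mul_sum,
          Finset.sum_congr rfl fun i (_ : i ∈ univ) => Real.log_div (hQi i) (hLi i),
          Finset.sum_sub_distrib]
        ring
    -- the main real identity
    have hkey : realKl π P (tensorBlocks S L) =
        realKl π P (tensorBlocks S fun i => keepS π P (S i)) +
          ∑ i, realKl (margS π (S i)) (keepS π P (S i)) (L i) := by
      simp only [realKl]
      simp_rw [hpoint, Finset.sum_add_distrib, mul_add]
      rw [Finset.sum_add_distrib]
      congr 1
      -- remaining: cross term equals the sum of block divergences
      have step1 : ∑ x, π x * ∑ y, ∑ i, (if P x y = 0 then (0:ℝ) else P x y *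
            Real.log (keepS π P (S i) (restr (S i) x) (restr (S i) y) /
              L i (restr (S i) x) (restr (S i) y))) =
          ∑ i, ∑ x, ∑ y, π x * (if P x y = 0 then (0:ℝ) else P x y *
            Real.log (keepS π P (S i) (restr (S i) x) (restr (S i) y) /
              L i (restr (S i) x) (restr (S i) y))) := by
        simp_rw [Finset.mul_sum]
        exact Eq.trans (Finset.sum_congr rfl fun x _ => Finset.sum_comm) Finset.sum_comm
      rw [step1]
      refine Finset.sum_congr rfl fun i _ => ?_
      have h1 : ∀ x y, π x * (if P x y = 0 then (0:ℝ) else P x y *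
          Real.log (keepS π P (S i) (restr (S i) x) (restr (S i) y) /
            L i (restr (S i) x) (restr (S i) y))) =
          π x * P x y * (if keepS π P (S i) (restr (S i) x) (restr (S i) y) = 0 then 0
            else Real.log (keepS π P (S i) (restr (S i) x) (restr (S i) y) /
              L i (restr (S i) x) (restr (S i) y))) := by
        intro x y
        by_cases hPxy : P x y = 0
        · simp [hPxy]
        · rw [if_neg hPxy, if_neg (hQpos i x y hPxy).ne']
          ring
      simp_rw [h1]
      have h2 := hgroup i (fun xs ys => if keepS π P (S i) xs ys = 0 then (0:ℝ)
        else Real.log (keepS π P (S i) xs ys / L i xs ys))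
      rw [← h2]
      refine Finset.sum_congr rfl fun xs _ => ?_
      rw [Finset.mul_sum]
      refine Finset.sum_congr rfl fun ys _ => ?_
      by_cases hq : keepS π P (S i) xs ys = 0
      · simp [hq]
      · rw [if_neg hq, if_neg hq, mul_assoc]
    -- Gibbs inequality on each row
    have hrow := fun (i : Fin n) (xs : ∀ j : S i, X j.1) =>
      gibbs_row (keepS π P (S i) xs) (L i xs) (fun ys => hQ0 i xs ys)
        (fun ys => (hL i).1 xs ys) (hQrow i xs) ((hL i).2 xs) (fun ys => hc i xs ys)
    have hCnn : ∀ i, 0 ≤ realKl (margS π (S i)) (keepS π P (S i)) (L i) := by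
      intro i
      simp only [realKl]
      exact Finset.sum_nonneg fun xs _ => mul_nonneg (hmarg (S i) xs).le (hrow i xs).1
    refine ⟨?_, ?_, ?_⟩
    · rw [eA, eB]
      have hS : ∑ i, klDiv (margS π (S i)) (keepS π P (S i)) (L i) =
          ((∑ i, realKl (margS π (S i)) (keepS π P (S i)) (L i) : ℝ) : EReal) := by
        rw [ereal_coe_sum]
        exact Finset.sum_congr rfl fun i _ => eC i
      rw [hS, ← EReal.coe_add, EReal.coe_eq_coe_iff]
      exact hkey
    · rw [eA, eB]
      have hsum : 0 ≤ ∑ i, realKl (margS π (S i)) (keepS π P (S i)) (L i) :=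
        Finset.sum_nonneg fun i _ => hCnn i
      exact EReal.coe_le_coe_iff.2 (by rw [hkey]; linarith)
    · intro h
      rw [eA, eB, EReal.coe_eq_coe_iff] at h
      have hsum0 : ∑ i, realKl (margS π (S i)) (keepS π P (S i)) (L i) = 0 := by
        rw [hkey] at h
        linarith
      have hC0 := (Finset.sum_eq_zero_iff_of_nonneg fun i _ => hCnn i).1 hsum0
      funext i
      have hCi := hC0 i (Finset.mem_univ i)
      simp only [realKl] at hCi
      have hxs0 := (Finset.sum_eq_zero_iff_of_nonneg fun xs _ =>
        mul_nonneg (hmarg (S i) xs).le (hrow i xs).1).1 hCi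
      funext xs
      have hxs := hxs0 xs (Finset.mem_univ xs)
      have hrow0 : ∑ ys, (if keepS π P (S i) xs ys = 0 then (0:ℝ)
          else keepS π P (S i) xs ys * Real.log (keepS π P (S i) xs ys / L i xs ys)) = 0 := by
        rcases mul_eq_zero.1 hxs with h' | h'
        · exact absurd h' (hmarg (S i) xs).ne'
        · exact h'
      exact ((hrow i xs).2 hrow0).symm
  · -- infinite case
    push_neg at hc
    obtain ⟨i0, xs0, ys0, hq0, hl0⟩ := hc
    have hnum0 : (∑ x, ∑ y, if (∀ j : S i0, x j.1 = xs0 j) ∧ (∀ j : S i0, y j.1 = ys0 j)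
        then π x * P x y else 0) ≠ 0 := by
      intro h
      apply hq0
      simp only [keepS]
      rw [h, zero_div]
    obtain ⟨x0, _, hx0⟩ := Finset.exists_ne_zero_of_sum_ne_zero hnum0
    obtain ⟨y0, _, hy0⟩ := Finset.exists_ne_zero_of_sum_ne_zero hx0
    have hcond : (∀ j : S i0, x0 j.1 = xs0 j) ∧ (∀ j : S i0, y0 j.1 = ys0 j) := by
      by_contra h
      rw [if_neg h] at hy0
      exact hy0 rfl
    rw [if_pos hcond] at hy0
    have hPxy0 : P x0 y0 ≠ 0 := fun h => hy0 (by rw [h, mul_zero])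
    have hrx : restr (S i0) x0 = xs0 := funext hcond.1
    have hry : restr (S i0) y0 = ys0 := funext hcond.2
    have hLt0 : tensorBlocks S L x0 y0 = 0 := by
      simp only [tensorBlocks]
      apply Finset.prod_eq_zero (Finset.mem_univ i0)
      rw [hrx, hry, hl0]
    have htopL : klDiv π P (tensorBlocks S L) = ⊤ := by
      rw [klDiv]
      apply ereal_sum_eq_top _ _ (fun x _ => ereal_coe_mul_ne_bot _ (hpos x).le _
        (ereal_sum_ne_bot _ _ fun y _ => klTerm_ne_bot _ _)) x0 (Finset.mem_univ x0)
      have hinner : ∑ y, klTerm (P x0 y) (tensorBlocks S L x0 y) = ⊤ := by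
        refine ereal_sum_eq_top _ _ (fun y _ => klTerm_ne_bot _ _) y0 (Finset.mem_univ y0) ?_
        unfold klTerm
        rw [if_neg hPxy0, hLt0]
        simp
      rw [hinner]
      exact EReal.coe_mul_top_of_pos (hpos x0)
    have htopC : klDiv (margS π (S i0)) (keepS π P (S i0)) (L i0) = ⊤ := by
      rw [klDiv]
      apply ereal_sum_eq_top _ _ (fun xs _ => ereal_coe_mul_ne_bot _ (hmarg (S i0) xs).le _
        (ereal_sum_ne_bot _ _ fun ys _ => klTerm_ne_bot _ _)) xs0 (Finset.mem_univ xs0)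
      have hinner : ∑ ys, klTerm (keepS π P (S i0) xs0 ys) (L i0 xs0 ys) = ⊤ := by
        refine ereal_sum_eq_top _ _ (fun ys _ => klTerm_ne_bot _ _) ys0 (Finset.mem_univ ys0) ?_
        unfold klTerm
        rw [if_neg hq0, if_pos hl0]
      rw [hinner]
      exact EReal.coe_mul_top_of_pos (hmarg (S i0) xs0)
    have htopSum : ∑ i, klDiv (margS π (S i)) (keepS π P (S i)) (L i) = ⊤ :=
      ereal_sum_eq_top _ _ (fun i _ => klDiv_ne_bot _ (fun xs => (hmarg (S i) xs).le) _ _)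
        i0 (Finset.mem_univ i0) htopC
    refine ⟨?_, ?_, ?_⟩
    · rw [htopL, htopSum, eB, EReal.add_top_of_ne_bot (EReal.coe_ne_bot _)]
    · rw [htopL]
      exact le_top
    · intro h
      rw [htopL, eB] at h
      exact absurd h.symm (EReal.coe_ne_top _)
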